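/- The conjugacy class in GL_n(F_q) of a matrix A with rank(A − I) = k has at most q^{2nk} elements. -/

import Mathlib

open Matrix Finset

/-- A matrix of rank at most `k` factors through `F^k`. -/
lemma exists_factorization {F : Type*} [Field F] {n k : ℕ}
    (M : Matrix (Fin n) (Fin n) F) (h : M.rank ≤ k) :
    ∃ (X : Matrix (Fin n) (Fin k) F) (Y : Matrix (Fin k) (Fin n) F), M = X * Y := by
  classical
  set V := LinearMap.range M.mulVecLin with hV
  have hfin : Module.finrank F V = M.rank := rfl
  set r : ℕ := Module.finrank F V with hr
  have hrk : r ≤ k := le_trans (le_of_eq hfin) h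
  obtain ⟨b⟩ : Nonempty (Module.Basis (Fin r) F V) := ⟨Module.finBasis F V⟩
  have hmem : ∀ j : Fin n, (fun i => M i j) ∈ V := by
    intro j
    refine ⟨Pi.single j 1, ?_⟩
    simp [Matrix.mulVecLin_apply, Matrix.mulVec_single]
    rfl
  set c : Fin n → V := fun j => ⟨fun i => M i j, hmem j⟩ with hc
  refine ⟨fun i t => if ht : (t : ℕ) < r then ((b ⟨t, ht⟩ : V) : Fin n → F) i else 0,
    fun t j => if ht : (t : ℕ) < r then b.repr (c j) ⟨t, ht⟩ else 0, ?_⟩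
  ext i j
  show M i j = ∑ t : Fin k,
      (if ht : (t : ℕ) < r then ((b ⟨t, ht⟩ : V) : Fin n → F) i else 0) *
        (if ht : (t : ℕ) < r then b.repr (c j) ⟨t, ht⟩ else 0)
  have key : ∑ t : Fin k,
      (if ht : (t : ℕ) < r then ((b ⟨t, ht⟩ : V) : Fin n → F) i else 0) *
        (if ht : (t : ℕ) < r then b.repr (c j) ⟨t, ht⟩ else 0)
      = ∑ s : Fin r, ((b s : V) : Fin n → F) i * b.repr (c j) s := by
    have hzero : ∀ t ∈ (Finset.univ : Finset (Fin k)),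
        t ∉ (Finset.univ : Finset (Fin r)).map (Fin.castLEEmb hrk) →
        (if ht : (t : ℕ) < r then ((b ⟨t, ht⟩ : V) : Fin n → F) i else 0) *
          (if ht : (t : ℕ) < r then b.repr (c j) ⟨t, ht⟩ else 0) = 0 := by
      intro t _ ht
      have ht' : ¬ (t : ℕ) < r := by
        intro hlt
        exact ht (Finset.mem_map.2 ⟨⟨t, hlt⟩, Finset.mem_univ _, Fin.ext rfl⟩)
      rw [dif_neg ht', zero_mul]
    rw [← Finset.sum_subset (Finset.subset_univ _) hzero, Finset.sum_map]
    apply Finset.sum_congr rfl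
    intro s _
    have hs : ((Fin.castLEEmb hrk s : Fin k) : ℕ) < r := by
      simp only [Fin.castLEEmb_apply, Fin.coe_castLE]
      exact s.isLt
    rw [dif_pos hs, dif_pos hs]
    have : (⟨(Fin.castLEEmb hrk s : Fin k), hs⟩ : Fin r) = s := Fin.ext (by simp)
    rw [this]
  rw [key]
  have h2 : ((∑ s : Fin r, b.repr (c j) s • b s : V) : Fin n → F) i
      = ((c j : V) : Fin n → F) i := by
    rw [b.sum_repr (c j)]
  have := h2.symm
  have hcj : ((c j : V) : Fin n → F) i = M i j := rfl
  rw [hcj] at this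
  simpa [Submodule.coe_sum, mul_comm, -Module.Basis.sum_repr] using this

theorem stmt10 (F : Type*) [Field F] [Fintype F] (n k : ℕ)
    (A : Matrix.GeneralLinearGroup (Fin n) F)
    (hk : ((A : Matrix (Fin n) (Fin n) F) - 1).rank = k) :
    Set.ncard {B : Matrix.GeneralLinearGroup (Fin n) F | IsConj A B} ≤
      Fintype.card F ^ (2 * n * k) := by
  classical
  set s := {B : Matrix.GeneralLinearGroup (Fin n) F | IsConj A B}
  have hrank : ∀ B ∈ s, ((B : Matrix (Fin n) (Fin n) F) - 1).rank ≤ k := by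
    intro B hB
    rw [Set.mem_setOf_eq, isConj_iff] at hB
    obtain ⟨C, hC⟩ := hB
    have hdet : IsUnit ((C : Matrix.GeneralLinearGroup (Fin n) F) :
        Matrix (Fin n) (Fin n) F).det :=
      (Matrix.isUnit_iff_isUnit_det _).1 C.isUnit
    have hdet' : IsUnit ((C⁻¹ : Matrix.GeneralLinearGroup (Fin n) F) :
        Matrix (Fin n) (Fin n) F).det :=
      (Matrix.isUnit_iff_isUnit_det _).1 (C⁻¹).isUnit
    have hCC : (C : Matrix (Fin n) (Fin n) F) *
        ((C⁻¹ : Matrix.GeneralLinearGroup (Fin n) F) : Matrix (Fin n) (Fin n) F) = 1 := by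
      rw [← Units.val_mul, mul_inv_cancel C, Units.val_one]
    have hBval : (B : Matrix (Fin n) (Fin n) F) =
        (C : Matrix (Fin n) (Fin n) F) * (A : Matrix (Fin n) (Fin n) F) *
          ((C⁻¹ : Matrix.GeneralLinearGroup (Fin n) F) : Matrix (Fin n) (Fin n) F) := by
      exact_mod_cast congrArg Units.val hC.symm
    have hB : (B : Matrix (Fin n) (Fin n) F) - 1 =
        (C : Matrix (Fin n) (Fin n) F) * ((A : Matrix (Fin n) (Fin n) F) - 1) *
          ((C⁻¹ : Matrix.GeneralLinearGroup (Fin n) F) : Matrix (Fin n) (Fin n) F) := by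
      rw [mul_sub, sub_mul, mul_one, hCC, hBval, mul_assoc]
    rw [hB, Matrix.rank_mul_eq_left_of_isUnit_det _ _ hdet',
      Matrix.rank_mul_eq_right_of_isUnit_det _ _ hdet, hk]
  set P := Matrix (Fin n) (Fin k) F × Matrix (Fin k) (Fin n) F
  have hXY : ∀ B : s, ∃ p : P, ((B : Matrix.GeneralLinearGroup (Fin n) F) :
      Matrix (Fin n) (Fin n) F) - 1 = p.1 * p.2 := by
    rintro ⟨B, hB⟩
    obtain ⟨X, Y, hXY⟩ := exists_factorization _ (hrank B hB)
    exact ⟨⟨X, Y⟩, hXY⟩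
  choose f hf using hXY
  have hinj : Function.Injective f := by
    intro B B' h
    have : ((B : Matrix.GeneralLinearGroup (Fin n) F) : Matrix (Fin n) (Fin n) F) - 1
        = ((B' : Matrix.GeneralLinearGroup (Fin n) F) : Matrix (Fin n) (Fin n) F) - 1 := by
      rw [hf B, hf B', h]
    exact Subtype.ext (Units.ext (sub_left_injective this))
  have hcard : Set.ncard s = Nat.card s := (Nat.card_coe_set_eq s).symm
  rw [hcard]
  have hP : Nat.card P = Fintype.card F ^ (2 * n * k) := by
    rw [Nat.card_eq_fintype_card]
    have h1 : Fintype.card (Matrix (Fin n) (Fin k) F) = Fintype.card F ^ (n * k) := by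
      show Fintype.card (Fin n → Fin k → F) = _
      simp only [Fintype.card_fun, Fintype.card_fin]
      rw [← pow_mul, mul_comm]
    have h2 : Fintype.card (Matrix (Fin k) (Fin n) F) = Fintype.card F ^ (k * n) := by
      show Fintype.card (Fin k → Fin n → F) = _
      simp only [Fintype.card_fun, Fintype.card_fin]
      rw [← pow_mul, mul_comm]
    have hp : Fintype.card P = Fintype.card (Matrix (Fin n) (Fin k) F) *
        Fintype.card (Matrix (Fin k) (Fin n) F) := Fintype.card_prod _ _
    rw [hp, h1, h2, ← pow_add]
    congr 1
    ring
  calc Nat.card s ≤ Nat.card P := Nat.card_le_card_of_injective f hinj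
    _ = Fintype.card F ^ (2 * n * k) := hP
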